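/- For all c ∈ ℤ and t, p ∈ ℕ with 0 ≤ p ≤ t, one has q^{−pt}·[K,K̃;c;t] = Σ_{j=0}^{p} [K,K̃;c−p;t−j] · [p choose j]_q · K̃^{−j} · q^{−cj} in D_q. In particular, for integers c, t with 0 ≤ c ≤ t, [K,K̃;c;t] = Σ_{j=0}^{c} [K,K̃;t−j] · [c choose j]_q · K̃^{−j} · q^{c(t−j)}. -/

import Mathlib

noncomputable section

/-- Generators of the quantum double `D_q`. -/
inductive DGen : Type
  | E | F | K | Kinv | Kt | Ktinv
  deriving DecidableEq

/-- The defining relations of `D_q`. -/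
inductive DRel (k : Type) [Field k] (q : k) :
    FreeAlgebra k DGen → FreeAlgebra k DGen → Prop
  | KE : DRel k q (FreeAlgebra.ι k DGen.K * FreeAlgebra.ι k DGen.E)
      ((q ^ 2) • (FreeAlgebra.ι k DGen.E * FreeAlgebra.ι k DGen.K))
  | KF : DRel k q (FreeAlgebra.ι k DGen.K * FreeAlgebra.ι k DGen.F)
      (((q ^ 2)⁻¹) • (FreeAlgebra.ι k DGen.F * FreeAlgebra.ι k DGen.K))
  | KtE : DRel k q (FreeAlgebra.ι k DGen.Kt * FreeAlgebra.ι k DGen.E)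
      ((q ^ 2) • (FreeAlgebra.ι k DGen.E * FreeAlgebra.ι k DGen.Kt))
  | KtF : DRel k q (FreeAlgebra.ι k DGen.Kt * FreeAlgebra.ι k DGen.F)
      (((q ^ 2)⁻¹) • (FreeAlgebra.ι k DGen.F * FreeAlgebra.ι k DGen.Kt))
  | KKinv : DRel k q (FreeAlgebra.ι k DGen.K * FreeAlgebra.ι k DGen.Kinv) 1
  | KinvK : DRel k q (FreeAlgebra.ι k DGen.Kinv * FreeAlgebra.ι k DGen.K) 1
  | KtKtinv : DRel k q (FreeAlgebra.ι k DGen.Kt * FreeAlgebra.ι k DGen.Ktinv) 1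
  | KtinvKt : DRel k q (FreeAlgebra.ι k DGen.Ktinv * FreeAlgebra.ι k DGen.Kt) 1
  | KKt : DRel k q (FreeAlgebra.ι k DGen.K * FreeAlgebra.ι k DGen.Kt)
      (FreeAlgebra.ι k DGen.Kt * FreeAlgebra.ι k DGen.K)
  | EF : DRel k q (FreeAlgebra.ι k DGen.E * FreeAlgebra.ι k DGen.F)
      (FreeAlgebra.ι k DGen.F * FreeAlgebra.ι k DGen.E +
        ((q - q⁻¹)⁻¹) • (FreeAlgebra.ι k DGen.K - FreeAlgebra.ι k DGen.Ktinv))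

/-- The quantum double `D_q` of `U_q(sl2)^{≤0}`, presented by generators and relations. -/
abbrev Dq (k : Type) [Field k] (q : k) := RingQuot (DRel k q)

def DE (k : Type) [Field k] (q : k) : Dq k q :=
  RingQuot.mkAlgHom k (DRel k q) (FreeAlgebra.ι k DGen.E)
def DF (k : Type) [Field k] (q : k) : Dq k q :=
  RingQuot.mkAlgHom k (DRel k q) (FreeAlgebra.ι k DGen.F)
def DK (k : Type) [Field k] (q : k) : Dq k q :=
  RingQuot.mkAlgHom k (DRel k q) (FreeAlgebra.ι k DGen.K)
def DKinv (k : Type) [Field k] (q : k) : Dq k q :=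
  RingQuot.mkAlgHom k (DRel k q) (FreeAlgebra.ι k DGen.Kinv)
def DKt (k : Type) [Field k] (q : k) : Dq k q :=
  RingQuot.mkAlgHom k (DRel k q) (FreeAlgebra.ι k DGen.Kt)
def DKtinv (k : Type) [Field k] (q : k) : Dq k q :=
  RingQuot.mkAlgHom k (DRel k q) (FreeAlgebra.ι k DGen.Ktinv)

/-- The quantum integer `[n]_q = (qⁿ - q⁻ⁿ)/(q - q⁻¹)`. -/
def qint (k : Type) [Field k] (q : k) (n : ℕ) : k := (q ^ n - q⁻¹ ^ n) / (q - q⁻¹)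

/-- The quantum factorial `[n]_q!`. -/
def qfact (k : Type) [Field k] (q : k) : ℕ → k
  | 0 => 1
  | n + 1 => qfact k q n * qint k q (n + 1)

/-- The Gaussian binomial coefficient `[m choose n]_q`. -/
def qbinom (k : Type) [Field k] (q : k) (m n : ℕ) : k :=
  qfact k q m / (qfact k q n * qfact k q (m - n))

/-- The element `[K,K̃;c;t] = ∏_{s=1}^t (K q^{c-s+1} - K̃⁻¹ q^{-c+s-1})/(q^s - q^{-s})` of `D_q`. -/
def KKtc (k : Type) [Field k] (q : k) (c : ℤ) : ℕ → Dq k q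
  | 0 => 1
  | t + 1 =>
      KKtc k q c t *
        ((q ^ ((t : ℤ) + 1) - q ^ (-((t : ℤ) + 1)))⁻¹ •
          (q ^ (c - (t : ℤ)) • DK k q - q ^ ((t : ℤ) - c) • DKtinv k q))




variable {k : Type} [Field k] {q : k}

section Scalars

lemma hd1 (hq0 : q ≠ 0) (hq : ∀ n : ℕ, 0 < n → q ^ n ≠ 1) : q - q⁻¹ ≠ 0 := by
  intro h
  have h2 : q * q = 1 := by
    rw [sub_eq_zero] at h
    nth_rewrite 2 [h]
    exact mul_inv_cancel₀ hq0
  exact hq 2 (by norm_num) (by rw [pow_two]; exact h2)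

lemma pow_sub_ne (hq0 : q ≠ 0) (hq : ∀ n : ℕ, 0 < n → q ^ n ≠ 1) (n : ℕ) (hn : 0 < n) :
    q ^ n - q⁻¹ ^ n ≠ 0 := by
  intro h
  have h1 : q ^ n = (q ^ n)⁻¹ := by rw [← inv_pow]; exact sub_eq_zero.mp h
  have h2 : q ^ (2 * n) = 1 := by
    rw [two_mul, pow_add]
    nth_rewrite 2 [h1]
    exact mul_inv_cancel₀ (pow_ne_zero n hq0)
  exact hq (2 * n) (by omega) h2

lemma qint_ne_zero (hq0 : q ≠ 0) (hq : ∀ n : ℕ, 0 < n → q ^ n ≠ 1) (n : ℕ) (hn : 0 < n) :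
    qint k q n ≠ 0 :=
  div_ne_zero (pow_sub_ne hq0 hq n hn) (hd1 hq0 hq)

lemma qfact_ne_zero (hq0 : q ≠ 0) (hq : ∀ n : ℕ, 0 < n → q ^ n ≠ 1) (n : ℕ) :
    qfact k q n ≠ 0 := by
  induction n with
  | zero => simp [qfact]
  | succ m ih => exact mul_ne_zero ih (qint_ne_zero hq0 hq (m+1) (by omega))

lemma qfact_zero : qfact k q 0 = 1 := rfl

lemma qbinom_zero (hq0 : q ≠ 0) (hq : ∀ n : ℕ, 0 < n → q ^ n ≠ 1) (n : ℕ) :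
    qbinom k q n 0 = 1 := by
  unfold qbinom
  rw [Nat.sub_zero, qfact_zero, one_mul, div_self (qfact_ne_zero hq0 hq n)]

lemma qbinom_self (hq0 : q ≠ 0) (hq : ∀ n : ℕ, 0 < n → q ^ n ≠ 1) (n : ℕ) :
    qbinom k q n n = 1 := by
  unfold qbinom
  rw [Nat.sub_self, qfact_zero, mul_one, div_self (qfact_ne_zero hq0 hq n)]

lemma dz_ne (hq0 : q ≠ 0) (hq : ∀ n : ℕ, 0 < n → q ^ n ≠ 1) (t : ℕ) :
    q ^ ((t : ℤ) + 1) - q ^ (-((t : ℤ) + 1)) ≠ 0 := by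
  have h1 : ((t:ℤ) + 1) = ((t + 1 : ℕ) : ℤ) := by push_cast; ring
  have : q ^ ((t : ℤ) + 1) - q ^ (-((t : ℤ) + 1)) = q ^ (t+1) - q⁻¹ ^ (t+1) := by
    rw [h1, zpow_natCast, zpow_neg, ← inv_zpow, zpow_natCast]
  rw [this]
  exact pow_sub_ne hq0 hq (t+1) (by omega)

lemma qint_key (hq0 : q ≠ 0) (hq : ∀ n : ℕ, 0 < n → q ^ n ≠ 1) (m b : ℕ) :
    qint k q (m + 1 + b + 1) =
      q ^ (-((m : ℤ) + 1)) * qint k q (b + 1) + q ^ ((b : ℤ) + 1) * qint k q (m + 1) := by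
  have e1 : q ^ (-((m : ℤ) + 1)) = q⁻¹ ^ (m + 1) := by
    have h1 : ((m:ℤ) + 1) = ((m + 1 : ℕ) : ℤ) := by push_cast; ring
    rw [h1, zpow_neg, ← inv_zpow, zpow_natCast]
  have e2 : q ^ ((b : ℤ) + 1) = q ^ (b + 1) := by
    have h1 : ((b:ℤ) + 1) = ((b + 1 : ℕ) : ℤ) := by push_cast; ring
    rw [h1, zpow_natCast]
  rw [e1, e2]
  unfold qint
  rw [← mul_div_assoc, ← mul_div_assoc, ← add_div]
  congr 1
  ring

lemma pascal (hq0 : q ≠ 0) (hq : ∀ n : ℕ, 0 < n → q ^ n ≠ 1) (p m : ℕ) (h : m + 1 ≤ p) :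
    qbinom k q (p + 1) (m + 1) =
      q ^ (-((m : ℤ) + 1)) * qbinom k q p (m + 1) + q ^ ((p : ℤ) - m) * qbinom k q p m := by
  obtain ⟨b, rfl⟩ : ∃ b, p = m + 1 + b := ⟨p - (m+1), by omega⟩
  have s1 : m + 1 + b + 1 - (m + 1) = b + 1 := by omega
  have s2 : m + 1 + b - (m + 1) = b := by omega
  have s3 : m + 1 + b - m = b + 1 := by omega
  have e2 : q ^ (((m:ℤ) + 1 + (b:ℤ)) - (m:ℤ)) = q ^ ((b:ℤ) + 1) := by
    congr 1; ring
  unfold qbinom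
  rw [s1, s2, s3]
  push_cast
  rw [e2]
  have F := qfact_ne_zero (k := k) (q := q) hq0 hq
  have key := qint_key (k := k) (q := q) hq0 hq m b
  have h1 : qfact k q (m + 1 + b + 1) = qfact k q (m + 1 + b) * qint k q (m + 1 + b + 1) := rfl
  have h2 : qfact k q (m + 1) = qfact k q m * qint k q (m + 1) := rfl
  have h3 : qfact k q (b + 1) = qfact k q b * qint k q (b + 1) := rfl
  rw [h1, h2, h3, key]
  have Q1 := qint_ne_zero (k := k) (q := q) hq0 hq (m + 1) (by omega)
  have Q2 := qint_ne_zero (k := k) (q := q) hq0 hq (b + 1) (by omega)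
  set M := qfact k q m with hM
  set B := qfact k q b with hB
  set A := qfact k q (m + 1 + b) with hA
  set im := qint k q (m + 1) with him
  set ib := qint k q (b + 1) with hib
  have hMne : M ≠ 0 := F m
  have hBne : B ≠ 0 := F b
  field_simp
end Scalars

section DqAlg
variable (k : Type) [Field k] (q : k)

lemma DKt_mul_DKtinv : DKt k q * DKtinv k q = 1 := by
  have h := RingQuot.mkAlgHom_rel k (DRel.KtKtinv (k := k) (q := q))
  simpa [DKt, DKtinv, map_mul, map_one] using h

lemma DKtinv_mul_DKt : DKtinv k q * DKt k q = 1 := by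
  have h := RingQuot.mkAlgHom_rel k (DRel.KtinvKt (k := k) (q := q))
  simpa [DKt, DKtinv, map_mul, map_one] using h

lemma DK_mul_DKt : DK k q * DKt k q = DKt k q * DK k q := by
  have h := RingQuot.mkAlgHom_rel k (DRel.KKt (k := k) (q := q))
  simpa [DK, DKt, map_mul] using h

lemma commute_DK_DKtinv : Commute (DK k q) (DKtinv k q) := by
  have h1 := DKt_mul_DKtinv k q
  have h2 := DKtinv_mul_DKt k q
  have h3 := DK_mul_DKt k q
  show DK k q * DKtinv k q = DKtinv k q * DK k q
  calc DK k q * DKtinv k q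
      = (DKtinv k q * DKt k q) * (DK k q * DKtinv k q) := by rw [h2, one_mul]
    _ = DKtinv k q * ((DKt k q * DK k q) * DKtinv k q) := by
        simp only [mul_assoc]
    _ = DKtinv k q * ((DK k q * DKt k q) * DKtinv k q) := by rw [h3]
    _ = DKtinv k q * DK k q * (DKt k q * DKtinv k q) := by
        simp only [mul_assoc]
    _ = DKtinv k q * DK k q := by rw [h1, mul_one]

lemma commute_DK_KKtc (c : ℤ) (t : ℕ) : Commute (DK k q) (KKtc k q c t) := by
  induction t with
  | zero => exact Commute.one_right _
  | succ t ih =>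
      exact ih.mul_right ((((Commute.refl (DK k q)).smul_right _).sub_right
        ((commute_DK_DKtinv k q).smul_right _)).smul_right _)

lemma commute_DKtinv_KKtc (c : ℤ) (t : ℕ) : Commute (DKtinv k q) (KKtc k q c t) := by
  induction t with
  | zero => exact Commute.one_right _
  | succ t ih =>
      exact ih.mul_right (((((commute_DK_DKtinv k q).symm).smul_right _).sub_right
        (((Commute.refl (DKtinv k q))).smul_right _)).smul_right _)

end DqAlg

section Main
variable {k : Type} [Field k] {q : k}

lemma E1 (hq0 : q ≠ 0) (c : ℤ) (t : ℕ) :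
    KKtc k q c (t + 1) =
      (q ^ ((t : ℤ) + 1) - q ^ (-((t : ℤ) + 1)))⁻¹ •
        ((q ^ c • DK k q - q ^ (-c) • DKtinv k q) * KKtc k q (c - 1) t) := by
  induction t with
  | zero =>
      show KKtc k q c 0 * _ = _
      simp only [KKtc, Nat.cast_zero, zero_add, sub_zero, zero_sub, one_mul, mul_one]
  | succ t ih =>
      have e1 : c - ((t + 1 : ℕ) : ℤ) = (c - 1) - (t : ℤ) := by push_cast; ring
      have e2 : ((t + 1 : ℕ) : ℤ) - c = (t : ℤ) - (c - 1) := by push_cast; ring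
      show KKtc k q c (t + 1) * _ = _
      rw [ih, e1, e2]
      show _ = _ • (_ * (KKtc k q (c-1) t * _))
      simp only [smul_mul_assoc, mul_smul_comm, smul_smul, mul_assoc]

lemma L1 (hq0 : q ≠ 0) (hq : ∀ n : ℕ, 0 < n → q ^ n ≠ 1) (c : ℤ) (t : ℕ) :
    q ^ (-((t : ℤ) + 1)) • KKtc k q c (t + 1) =
      KKtc k q (c - 1) (t + 1) + q ^ (-c) • (KKtc k q (c - 1) t * DKtinv k q) := by
  rw [E1 hq0 c t]
  have hcomm : (q ^ c • DK k q - q ^ (-c) • DKtinv k q) * KKtc k q (c - 1) t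
      = KKtc k q (c - 1) t * (q ^ c • DK k q - q ^ (-c) • DKtinv k q) :=
    (((commute_DK_KKtc k q (c-1) t).smul_left _).sub_left
      ((commute_DKtinv_KKtc k q (c-1) t).smul_left _)).eq
  rw [hcomm]
  show _ = KKtc k q (c-1) t * _ + _
  rw [smul_smul, ← mul_smul_comm, ← mul_smul_comm, ← mul_add]
  congr 1
  have hu : q ^ (-((t:ℤ)+1)) = (q ^ ((t:ℤ)+1))⁻¹ := zpow_neg q _
  have hv : q ^ (-c) = (q ^ c)⁻¹ := zpow_neg q c
  have h3 : q ^ (c - 1 - (t:ℤ)) = q ^ c / q ^ ((t:ℤ)+1) := by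
    rw [← zpow_sub₀ hq0]; congr 1; ring
  have h4 : q ^ ((t:ℤ) - (c - 1)) = q ^ ((t:ℤ)+1) / q ^ c := by
    rw [← zpow_sub₀ hq0]; congr 1; ring
  have hd : q ^ ((t:ℤ)+1) - q ^ (-((t:ℤ)+1)) ≠ 0 := dz_ne hq0 hq t
  have hu0 : q ^ ((t:ℤ)+1) ≠ 0 := zpow_ne_zero _ hq0
  have hv0 : q ^ c ≠ 0 := zpow_ne_zero _ hq0
  rw [hu] at hd
  have hdd : q ^ ((t:ℤ)+1) * q ^ ((t:ℤ)+1) - 1 ≠ 0 := by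
    have h5 : q ^ ((t:ℤ)+1) * q ^ ((t:ℤ)+1) - 1 = (q ^ ((t:ℤ)+1) - (q ^ ((t:ℤ)+1))⁻¹) * q ^ ((t:ℤ)+1) := by
      field_simp
    rw [h5]
    exact mul_ne_zero hd hu0
  match_scalars
  · rw [hu, h3]
    field_simp
  · rw [hu, hv, h4]
    set u := q ^ ((t:ℤ)+1) with hudef
    set v := q ^ c with hvdef
    have hdd2 : u ^ 2 - 1 ≠ 0 := by rwa [pow_two]
    field_simp [hdd, hdd2]
    ring

def Aaux (k : Type) [Field k] (q : k) (c : ℤ) (t p j : ℕ) : Dq k q :=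
  (qbinom k q p j * q ^ (-(c * (j:ℤ)) - (j:ℤ))) •
    (KKtc k q (c - ((p:ℤ) + 1)) (t - j) * DKtinv k q ^ j)

def Baux (k : Type) [Field k] (q : k) (c : ℤ) (t p j : ℕ) : Dq k q :=
  (qbinom k q p j * q ^ (-(c * ((j:ℤ) + 1)) - (j:ℤ) + (p:ℤ))) •
    (KKtc k q (c - ((p:ℤ) + 1)) (t - (j+1)) * DKtinv k q ^ (j+1))

def Taux (k : Type) [Field k] (q : k) (c : ℤ) (t p j : ℕ) : Dq k q :=
  (qbinom k q (p+1) j * q ^ (-(c * (j:ℤ)))) •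
    (KKtc k q (c - ((p:ℤ) + 1)) (t - j) * DKtinv k q ^ j)

lemma TA0 (hq0 : q ≠ 0) (hq : ∀ n : ℕ, 0 < n → q ^ n ≠ 1) (c : ℤ) (t p : ℕ) :
    Taux k q c t p 0 = Aaux k q c t p 0 := by
  unfold Taux Aaux
  rw [qbinom_zero hq0 hq, qbinom_zero hq0 hq]
  norm_num

lemma TB (hq0 : q ≠ 0) (hq : ∀ n : ℕ, 0 < n → q ^ n ≠ 1) (c : ℤ) (t p : ℕ) :
    Taux k q c t p (p+1) = Baux k q c t p p := by
  unfold Taux Baux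
  rw [qbinom_self hq0 hq, qbinom_self hq0 hq]
  congr 2
  push_cast
  ring

lemma TAB (hq0 : q ≠ 0) (hq : ∀ n : ℕ, 0 < n → q ^ n ≠ 1) (c : ℤ) (t p i : ℕ)
    (hi : i + 1 ≤ p) :
    Taux k q c t p (i+1) = Aaux k q c t p (i+1) + Baux k q c t p i := by
  unfold Taux Aaux Baux
  rw [← add_smul]
  congr 1
  rw [pascal hq0 hq p i hi, add_mul]
  push_cast
  congr 1
  · rw [show -(c*((i:ℤ)+1)) - ((i:ℤ)+1) = (-((i:ℤ)+1)) + (-(c*((i:ℤ)+1))) by ring,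
      zpow_add₀ hq0]
    ring
  · rw [show -(c*((i:ℤ)+1)) - (i:ℤ) + (p:ℤ) = ((p:ℤ) - (i:ℤ)) + (-(c*((i:ℤ)+1))) by ring,
      zpow_add₀ hq0]
    ring

lemma main1 (hq0 : q ≠ 0) (hq : ∀ n : ℕ, 0 < n → q ^ n ≠ 1) (c : ℤ) (t p : ℕ) (h : p ≤ t) :
    (q ^ (-((p : ℤ) * t))) • KKtc k q c t =
      ∑ j ∈ Finset.range (p + 1),
        (qbinom k q p j * q ^ (-(c * (j : ℤ)))) •
          (KKtc k q (c - (p : ℤ)) (t - j) * DKtinv k q ^ j) := by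
  induction p generalizing c t with
  | zero => simp [Finset.sum_range_one, qbinom_zero hq0 hq]
  | succ p IH =>
    have hpt : p ≤ t := le_trans (Nat.le_succ p) h
    have e : (-(((p+1:ℕ) : ℤ) * t)) = (-(t:ℤ)) + (-((p:ℤ) * t)) := by push_cast; ring
    rw [e, zpow_add₀ hq0, mul_smul, IH c t hpt, Finset.smul_sum]
    have key : ∀ j ∈ Finset.range (p+1),
        q ^ (-(t:ℤ)) • ((qbinom k q p j * q ^ (-(c * (j:ℤ)))) •
          (KKtc k q (c - (p:ℤ)) (t - j) * DKtinv k q ^ j))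
        = Aaux k q c t p j + Baux k q c t p j := by
      intro j hj
      have hj' : j ≤ p := Nat.lt_succ_iff.mp (Finset.mem_range.mp hj)
      set u := t - (j+1) with hu2
      have hu : t - j = u + 1 := by omega
      have htu : t = j + u + 1 := by omega
      have et : (-(t:ℤ)) = (-(j:ℤ)) + (-((u:ℤ)+1)) := by
        rw [htu]; push_cast; ring
      calc q ^ (-(t:ℤ)) • ((qbinom k q p j * q ^ (-(c * (j:ℤ)))) •
              (KKtc k q (c - (p:ℤ)) (t - j) * DKtinv k q ^ j))
          = ((qbinom k q p j * q ^ (-(c * (j:ℤ)) - (j:ℤ))) * q ^ (-((u:ℤ)+1))) •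
              (KKtc k q (c - (p:ℤ)) (u + 1) * DKtinv k q ^ j) := by
            rw [hu, smul_smul]
            congr 1
            rw [show -(c*(j:ℤ)) - (j:ℤ) = (-(c*(j:ℤ))) + (-(j:ℤ)) by ring,
              zpow_add₀ hq0, et, zpow_add₀ hq0]
            ring
        _ = (qbinom k q p j * q ^ (-(c * (j:ℤ)) - (j:ℤ))) •
              ((q ^ (-((u:ℤ)+1)) • KKtc k q (c - (p:ℤ)) (u + 1)) * DKtinv k q ^ j) := by
            rw [smul_mul_assoc, smul_smul]
        _ = (qbinom k q p j * q ^ (-(c * (j:ℤ)) - (j:ℤ))) •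
              ((KKtc k q (c - (p:ℤ) - 1) (u + 1)
                + q ^ (-(c - (p:ℤ))) • (KKtc k q (c - (p:ℤ) - 1) u * DKtinv k q)) *
                DKtinv k q ^ j) := by
            rw [L1 hq0 hq (c - (p:ℤ)) u]
        _ = Aaux k q c t p j + Baux k q c t p j := by
            rw [add_mul, smul_add]
            unfold Aaux Baux
            rw [sub_sub, hu, ← hu2]
            congr 1
            rw [smul_mul_assoc, smul_smul,
              mul_assoc (KKtc k q (c - ((p:ℤ)+1)) u) (DKtinv k q) (DKtinv k q ^ j),
              ← pow_succ']
            congr 1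
            rw [mul_assoc, ← zpow_add₀ hq0]
            congr 2
            ring
    rw [Finset.sum_congr rfl key, Finset.sum_add_distrib]
    have hTdef : ∀ j ∈ Finset.range (p+1+1),
        (qbinom k q (p+1) j * q ^ (-(c * (j:ℤ)))) •
          (KKtc k q (c - ((p+1:ℕ):ℤ)) (t - j) * DKtinv k q ^ j) = Taux k q c t p j := by
      intro j hj
      unfold Taux
      norm_num
    refine Eq.trans ?_ (Finset.sum_congr rfl hTdef).symm
    calc ∑ j ∈ Finset.range (p+1), Aaux k q c t p j
          + ∑ j ∈ Finset.range (p+1), Baux k q c t p j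
        = (∑ i ∈ Finset.range p, Aaux k q c t p (i+1) + Aaux k q c t p 0)
          + (∑ i ∈ Finset.range p, Baux k q c t p i + Baux k q c t p p) := by
          rw [Finset.sum_range_succ' (Aaux k q c t p) p, Finset.sum_range_succ]
      _ = (Taux k q c t p 0 + ∑ i ∈ Finset.range p, Taux k q c t p (i+1))
          + Taux k q c t p (p+1) := by
          rw [TA0 hq0 hq, TB hq0 hq]
          rw [Finset.sum_congr rfl (fun i hi => (TAB hq0 hq c t p i
            (Nat.succ_le_of_lt (Finset.mem_range.mp hi)))), Finset.sum_add_distrib]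
          abel
      _ = ∑ j ∈ Finset.range (p+1+1), Taux k q c t p j := by
          rw [Finset.sum_range_succ, Finset.sum_range_succ' (Taux k q c t p) p]
          abel

lemma main2 (hq0 : q ≠ 0) (hq : ∀ n : ℕ, 0 < n → q ^ n ≠ 1) (c t : ℕ) (hct : c ≤ t) :
    KKtc k q (c:ℤ) t =
      ∑ j ∈ Finset.range (c + 1),
        (qbinom k q c j * q ^ (c * (t - j))) •
          (KKtc k q 0 (t - j) * DKtinv k q ^ j) := by
  have h := main1 hq0 hq (c:ℤ) t c hct
  calc KKtc k q (c:ℤ) t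
      = q ^ ((c:ℤ) * t) • (q ^ (-((c:ℤ) * t)) • KKtc k q (c:ℤ) t) := by
        rw [smul_smul, ← zpow_add₀ hq0,
          show ((c:ℤ)*(t:ℤ) + -((c:ℤ)*(t:ℤ))) = 0 by ring, zpow_zero, one_smul]
    _ = q ^ ((c:ℤ) * t) • ∑ j ∈ Finset.range (c+1),
          (qbinom k q c j * q ^ (-((c:ℤ) * (j:ℤ)))) •
            (KKtc k q ((c:ℤ) - (c:ℤ)) (t - j) * DKtinv k q ^ j) := by rw [h]
    _ = ∑ j ∈ Finset.range (c + 1),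
          (qbinom k q c j * q ^ (c * (t - j))) •
            (KKtc k q 0 (t - j) * DKtinv k q ^ j) := by
        rw [Finset.smul_sum]
        refine Finset.sum_congr rfl ?_
        intro j hj
        have hj' : j ≤ c := Nat.lt_succ_iff.mp (Finset.mem_range.mp hj)
        rw [smul_smul, sub_self]
        congr 1
        have he : ((c*(t-j) : ℕ) : ℤ) = (c:ℤ)*(t:ℤ) + -((c:ℤ)*(j:ℤ)) := by
          rw [Nat.cast_mul, Nat.cast_sub (le_trans hj' hct)]; ring
        rw [show (q:k) ^ (c*(t-j)) = q ^ (((c*(t-j):ℕ)):ℤ) from (zpow_natCast q _).symm,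
          he, zpow_add₀ hq0]
        ring


/-- for `c : ℤ` and `t p : ℕ` with `p ≤ t`,
`q^{−pt}·[K,K̃;c;t] = Σ_{j=0}^{p} [K,K̃;c−p;t−j]·[p choose j]_q·K̃^{−j}·q^{−cj}`;
in particular for `0 ≤ c ≤ t`,
`[K,K̃;c;t] = Σ_{j=0}^{c} [K,K̃;t−j]·[c choose j]_q·K̃^{−j}·q^{c(t−j)}`. -/
theorem KKtc_reduction_Ktinv (k : Type) [Field k] (q : k)
    (hq0 : q ≠ 0) (hq : ∀ n : ℕ, 0 < n → q ^ n ≠ 1) :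
    (∀ (c : ℤ) (t p : ℕ), p ≤ t →
        (q ^ (-((p : ℤ) * t))) • KKtc k q c t =
          ∑ j ∈ Finset.range (p + 1),
            (qbinom k q p j * q ^ (-(c * (j : ℤ)))) •
              (KKtc k q (c - (p : ℤ)) (t - j) * DKtinv k q ^ j)) ∧
    (∀ c t : ℕ, c ≤ t →
        KKtc k q (c : ℤ) t =
          ∑ j ∈ Finset.range (c + 1),
            (qbinom k q c j * q ^ (c * (t - j))) •
              (KKtc k q 0 (t - j) * DKtinv k q ^ j)) := by
  constructor
  · exact fun c t p hp => main1 hq0 hq c t p hp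
  · exact fun c t h => main2 hq0 hq c t h


end Main
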